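/- For n ≥ 3 and 1 ≤ p ≤ n−2, every order-preserving partial contraction α on [n] with |im α| = p can be written as a composition α = β∘γ of two order-preserving partial contractions β, γ on [n], each with image of size p+1. -/

import Mathlib

/-- Partial transformations on the chain with `n` elements. -/
abbrev PT (n : ℕ) := Fin n → Option (Fin n)

/-- Left-to-right composition of partial transformations: `x(f*g) = g(f(x))`. -/
instance PT.instMul (n : ℕ) : Mul (PT n) := ⟨fun f g x => (f x).bind g⟩

instance PT.instSemigroup (n : ℕ) : Semigroup (PT n) where
  mul_assoc f g h := funext fun x => by
    show ((f x).bind g).bind h = (f x).bind (fun y => (g y).bind h)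
    cases f x <;> rfl

/-- Domain of a partial transformation. -/
def dom {n : ℕ} (f : PT n) : Set (Fin n) := {x | (f x).isSome}

/-- Image of a partial transformation. -/
def im {n : ℕ} (f : PT n) : Set (Fin n) := {y | ∃ x, f x = some y}

/-- `f` is a contraction: `|f x - f y| ≤ |x - y|` on its domain. -/
def IsContraction {n : ℕ} (f : PT n) : Prop :=
  ∀ x y a b, f x = some a → f y = some b → Nat.dist a.val b.val ≤ Nat.dist x.val y.val

/-- `f` is order-preserving on its domain. -/
def IsOP {n : ℕ} (f : PT n) : Prop :=
  ∀ x y a b, f x = some a → f y = some b → x ≤ y → a ≤ b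

/-- `f` is order-reversing on its domain. -/
def IsOR {n : ℕ} (f : PT n) : Prop :=
  ∀ x y a b, f x = some a → f y = some b → x ≤ y → b ≤ a

namespace Stmt5

def Nice {n : ℕ} (g : PT n) : Prop :=
  ∀ x y a b, g x = some a → g y = some b → x.val < y.val →
    a.val ≤ b.val ∧ b.val - a.val ≤ y.val - x.val

lemma nice_isOP {n : ℕ} {g : PT n} (h : Nice g) : IsOP g := by
  intro x y a b hx hy hxy
  rcases Nat.lt_or_ge x.val y.val with hlt | hge
  · exact (h x y a b hx hy hlt).1
  · have : x = y := Fin.ext (by have := Fin.le_def.mp hxy; omega)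
    subst this; rw [hx] at hy; injection hy with hy; subst hy; exact le_refl _

lemma nice_isC {n : ℕ} {g : PT n} (h : Nice g) : IsContraction g := by
  intro x y a b hx hy
  rcases Nat.lt_trichotomy x.val y.val with h1 | h1 | h1
  · have := h x y a b hx hy h1; simp [Nat.dist]; omega
  · have : x = y := Fin.ext h1
    subst this; rw [hx] at hy; injection hy with hy; subst hy; simp [Nat.dist]
  · have := h y x b a hy hx h1; simp [Nat.dist]; omega

lemma nice_of {n : ℕ} {g : PT n} (hop : IsOP g) (hc : IsContraction g) : Nice g := by
  intro x y a b hx hy hxy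
  have h1 := hop x y a b hx hy (Fin.le_def.mpr (by omega))
  have h2 := hc x y a b hx hy
  have h1' := Fin.le_def.mp h1
  simp [Nat.dist] at h2
  omega

lemma exists_not_mem {n : ℕ} {S : Set (Fin n)} (h : S.ncard < n) : ∃ s, s ∉ S := by
  by_contra hcon
  push_neg at hcon
  have : S = Set.univ := Set.eq_univ_of_forall hcon
  rw [this, Set.ncard_univ, Nat.card_eq_fintype_card, Fintype.card_fin] at h
  omega

lemma exists_fresh_low {n : ℕ} {S : Set (Fin n)} (h : S.ncard + 1 < n) :
    ∃ z : Fin n, z.val + 1 < n ∧ z ∉ S := by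
  by_contra hcon
  push_neg at hcon
  have hsub : {z : Fin n | z.val + 1 < n} ⊆ S := fun z hz => hcon z hz
  have hcard : ({z : Fin n | z.val + 1 < n}).ncard = n - 1 := by
    have hn2 : 2 ≤ n := by omega
    have heq : {z : Fin n | z.val + 1 < n} =
        (fun i : Fin (n-1) => (⟨i.val, by omega⟩ : Fin n)) '' Set.univ := by
      ext z
      constructor
      · intro hz
        have hz' : z.val + 1 < n := hz
        exact ⟨⟨z.val, by omega⟩, trivial, rfl⟩
      · rintro ⟨i, -, rfl⟩
        have := i.isLt
        simp only [Set.mem_setOf_eq]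
        omega
    rw [heq, Set.ncard_image_of_injective _ (fun a b hab => Fin.ext (by
      have := congrArg Fin.val hab; simpa using this)), Set.ncard_univ,
      Nat.card_eq_fintype_card, Fintype.card_fin]
  have := Set.ncard_le_ncard hsub (Set.toFinite S)
  omega



open Classical in
lemma padding {n : ℕ} (f : PT n) (p t : ℕ)
    (hp : (im f).ncard = p) (hpn : p + 2 ≤ n)
    (Ht : ∀ w b, f w = some b → b.val = w.val + t)
    (c : Fin n) (hcnone : f c = none) (hct : c.val + t < n) :
    ∃ β γ : PT n, IsOP β ∧ IsContraction β ∧ IsOP γ ∧ IsContraction γ ∧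
      (im β).ncard = p + 1 ∧ (im γ).ncard = p + 1 ∧ f = β * γ := by
  classical
  set d : Fin n := ⟨c.val + t, hct⟩ with hd_def
  have hdim : d ∉ im f := by
    rintro ⟨w, hw⟩
    have hv := Ht w d hw
    have : w = c := Fin.ext (by simp [hd_def] at hv; omega)
    subst this; rw [hcnone] at hw; exact nomatch hw
  have hfin : (im f).Finite := Set.toFinite _
  have hins : (insert d (im f)).ncard = p + 1 := by
    rw [Set.ncard_insert_of_notMem hdim hfin, hp]
  obtain ⟨s, hs⟩ := exists_not_mem (S := insert d (im f)) (by rw [hins]; omega)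
  have hsim : s ∉ im f := fun h => hs (Set.mem_insert_of_mem _ h)
  have hsd : s ≠ d := fun h => hs (h ▸ Set.mem_insert _ _)
  set β : PT n := fun x => if x = c then some d else f x with hβ_def
  set γ : PT n := fun z => if z ∈ insert s (im f) then some z else none with hγ_def
  have hβval : ∀ x a, β x = some a → a.val = x.val + t := by
    intro x a hx
    simp only [hβ_def] at hx
    split_ifs at hx with h
    · subst h; injection hx with hx; subst hx; rfl
    · exact Ht x a hx
  have hβnice : Nice β := by
    intro x y a b hx hy hxy
    have h1 := hβval x a hx
    have h2 := hβval y b hy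
    omega
  have hγval : ∀ z a, γ z = some a → a = z := by
    intro z a hz
    simp only [hγ_def] at hz
    by_cases h : z ∈ insert s (im f)
    · rw [if_pos h] at hz; injection hz with hz; exact hz.symm
    · rw [if_neg h] at hz; exact nomatch hz
  have hγnice : Nice γ := by
    intro x y a b hx hy hxy
    have h1 := hγval x a hx
    have h2 := hγval y b hy
    subst h1; subst h2; omega
  have himβ : im β = insert d (im f) := by
    ext a
    constructor
    · rintro ⟨x, hx⟩
      simp only [hβ_def] at hx
      split_ifs at hx with h
      · injection hx with hx; subst hx; exact Set.mem_insert _ _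
      · exact Set.mem_insert_of_mem _ ⟨x, hx⟩
    · intro ha
      rcases Set.mem_insert_iff.mp ha with rfl | ⟨w, hw⟩
      · exact ⟨c, by simp [hβ_def]⟩
      · refine ⟨w, ?_⟩
        have hwc : w ≠ c := by intro h; subst h; rw [hcnone] at hw; exact nomatch hw
        simp [hβ_def, hwc, hw]
  have himγ : im γ = insert s (im f) := by
    ext a
    constructor
    · rintro ⟨x, hx⟩
      simp only [hγ_def] at hx
      by_cases h : x ∈ insert s (im f)
      · rw [if_pos h] at hx; injection hx with hx; exact hx ▸ h
      · rw [if_neg h] at hx; exact nomatch hx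
    · intro ha
      refine ⟨a, ?_⟩
      simp only [hγ_def]
      rw [if_pos ha]
  have hcomp : f = β * γ := by
    funext x9
    show f x9 = (β x9).bind γ
    by_cases huc : x9 = c
    · have hb : β x9 = some d := by simp [hβ_def, huc]
      have hγd : γ d = none := by
        simp only [hγ_def]
        rw [if_neg]
        intro h
        rcases Set.mem_insert_iff.mp h with h | h
        · exact hsd h.symm
        · exact hdim h
      rw [hb, huc, hcnone]
      show none = (some d).bind γ
      rw [Option.bind_some, hγd]
    · have hβu : β x9 = f x9 := by simp [hβ_def, huc]
      rw [hβu]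
      cases hfu : f x9 with
      | none => rfl
      | some b =>
        have hbim : b ∈ im f := ⟨x9, hfu⟩
        have hγb : γ b = some b := by
          simp only [hγ_def]
          rw [if_pos (Set.mem_insert_of_mem s hbim)]
        show some b = (some b).bind γ
        rw [Option.bind_some, hγb]
  exact ⟨β, γ, nice_isOP hβnice, nice_isC hβnice, nice_isOP hγnice, nice_isC hγnice,
    by rw [himβ, hins], by rw [himγ, Set.ncard_insert_of_notMem hsim hfin, hp], hcomp⟩




lemma core {n : ℕ} (f : PT n) (p : ℕ) (hop : IsOP f) (hc : IsContraction f)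
    (hp : (im f).ncard = p) (hpn : p + 2 ≤ n)
    (x₀ v : Fin n)
    (hE1 : ∀ w b, f w = some b → w.val < x₀.val → b.val < v.val ∧ v.val + w.val ≤ b.val + x₀.val)
    (hE2 : ∀ w b, f w = some b → x₀.val < w.val → v.val ≤ b.val ∧ b.val + x₀.val < v.val + w.val)
    (hE3 : ∀ b, f x₀ = some b → b = v)
    (hE4 : ∃ y, x₀.val < y.val ∧ f y = some v)
    (hE5 : ∀ w b, f w = some b → b.val + 1 < n) :
    ∃ β γ : PT n, IsOP β ∧ IsContraction β ∧ IsOP γ ∧ IsContraction γ ∧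
      (im β).ncard = p + 1 ∧ (im γ).ncard = p + 1 ∧ f = β * γ := by
  classical
  have hnice := nice_of hop hc
  obtain ⟨y₀, hy₀1, hy₀2⟩ := hE4
  have hvim : v ∈ im f := ⟨y₀, hy₀2⟩
  have hvn : v.val + 1 < n := hE5 _ _ hy₀2
  obtain ⟨z, hz1, hz2⟩ := exists_fresh_low (S := im f) (by rw [hp]; omega)
  have hzv : z ≠ v := fun h => hz2 (h ▸ hvim)
  have hzv' : z.val ≠ v.val := fun h => hzv (Fin.ext h)
  set e : Fin n := if z.val < v.val then z else ⟨z.val + 1, hz1⟩ with he_def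
  set τ : Fin n → Fin n :=
    fun y => ⟨y.val - (if v.val < y.val then 1 else 0), by have := y.isLt; omega⟩ with hτ_def
  have hτval : ∀ y : Fin n, (τ y).val = y.val - (if v.val < y.val then 1 else 0) := by
    intro y; simp [hτ_def]
  have hτlow : ∀ cc : Fin n, cc.val ≤ v.val → (τ cc).val = cc.val := by
    intro cc h; rw [hτval, if_neg (by omega)]; omega
  have hτhigh : ∀ cc : Fin n, v.val < cc.val → (τ cc).val = cc.val - 1 := by
    intro cc h; rw [hτval]; rw [if_pos h]
  have hτe : (τ e).val = z.val := by
    by_cases h : z.val < v.val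
    · have he : e = z := by rw [he_def, if_pos h]
      rw [he, hτlow z (by omega)]
    · have he : e = ⟨z.val + 1, hz1⟩ := by rw [he_def, if_neg h]
      rw [he, hτhigh _ (by simp; omega)]; simp
  set β : PT n := fun x => if x = x₀ then some v else
    (f x).bind (fun b => if x.val < x₀.val then some b
      else if h : b.val + 1 < n then some ⟨b.val + 1, h⟩ else none) with hβ_def
  have hβx₀ : β x₀ = some v := by simp [hβ_def]
  have hβlt : ∀ x, x.val < x₀.val → β x = f x := by
    intro x hx
    have hne : x ≠ x₀ := fun h => by subst h; omega
    simp only [hβ_def, if_neg hne]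
    cases f x with
    | none => rfl
    | some b => simp [hx]
  have hβgt : ∀ x b (hb : f x = some b), x₀.val < x.val → β x = some ⟨b.val + 1, hE5 x b hb⟩ := by
    intro x b hb hx
    have hne : x ≠ x₀ := fun h => by subst h; omega
    have h5 := hE5 x b hb
    have hnlt : ¬ x.val < x₀.val := by omega
    simp only [hβ_def, if_neg hne, hb]
    simp [hnlt, h5]
  have hβgt_none : ∀ x, f x = none → x ≠ x₀ → β x = none := by
    intro x hx hne; simp [hβ_def, if_neg hne, hx]
  have hβinv : ∀ x cc, β x = some cc →
      (x = x₀ ∧ cc = v) ∨ (x.val < x₀.val ∧ f x = some cc) ∨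
      (x₀.val < x.val ∧ ∃ b, f x = some b ∧ cc.val = b.val + 1) := by
    intro x cc hx
    by_cases hne : x = x₀
    · subst hne; rw [hβx₀] at hx; injection hx with hx; exact Or.inl ⟨rfl, hx.symm⟩
    · rcases Nat.lt_trichotomy x.val x₀.val with h | h | h
      · rw [hβlt x h] at hx; exact Or.inr (Or.inl ⟨h, hx⟩)
      · exact absurd (Fin.ext h) hne
      · cases hfx : f x with
        | none => rw [hβgt_none x hfx hne] at hx; exact nomatch hx
        | some b =>
          rw [hβgt x b hfx h] at hx
          injection hx with hx
          exact Or.inr (Or.inr ⟨h, Exists.intro b ⟨rfl, by rw [← hx]⟩⟩)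
  have hβnice : Nice β := by
    intro x y a b hx hy hxy
    rcases hβinv x a hx with ⟨rfl, rfl⟩ | ⟨h1, h2⟩ | ⟨h1, bb, h2, h3⟩ <;>
      rcases hβinv y b hy with ⟨hy1, rfl⟩ | ⟨h1', h2'⟩ | ⟨h1', bb', h2', h3'⟩
    · have := congrArg Fin.val hy1; omega
    · omega
    · have := hE2 y bb' h2' h1'; omega
    · have h4 := congrArg Fin.val hy1
      have := hE1 x a h2 h1; omega
    · have := hnice x y a b h2 h2' hxy; omega
    · have hA := hE1 x a h2 h1
      have hB := hE2 y bb' h2' h1'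
      omega
    · have := congrArg Fin.val hy1; omega
    · omega
    · have := hnice x y bb bb' h2 h2' hxy; omega
  set Dγ : Set (Fin n) := {cc | (∃ w b, f w = some b ∧ w.val < x₀.val ∧ cc = b) ∨
      ((∃ b, f x₀ = some b) ∧ cc = v) ∨
      (∃ w b, f w = some b ∧ x₀.val < w.val ∧ cc.val = b.val + 1) ∨ cc = e} with hD_def
  set γ : PT n := fun cc => if cc ∈ Dγ then some (τ cc) else none with hγ_def
  have hγval : ∀ cc a, γ cc = some a → a = τ cc ∧ cc ∈ Dγ := by
    intro cc a hcc
    simp only [hγ_def] at hcc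
    by_cases h : cc ∈ Dγ
    · rw [if_pos h] at hcc; injection hcc with hcc; exact ⟨hcc.symm, h⟩
    · rw [if_neg h] at hcc; exact nomatch hcc
  have hγmem : ∀ cc, cc ∈ Dγ → γ cc = some (τ cc) := by
    intro cc h; simp only [hγ_def]; rw [if_pos h]
  have hγnone : ∀ cc, cc ∉ Dγ → γ cc = none := by
    intro cc h; simp only [hγ_def]; rw [if_neg h]
  have hτmono : ∀ c1 c2 : Fin n, c1.val < c2.val →
      (τ c1).val ≤ (τ c2).val ∧ (τ c2).val - (τ c1).val ≤ c2.val - c1.val := by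
    intro c1 c2 h
    rw [hτval, hτval]
    split_ifs <;> omega
  have hγnice : Nice γ := by
    intro x y a b hx hy hxy
    obtain ⟨rfl, -⟩ := hγval x a hx
    obtain ⟨rfl, -⟩ := hγval y b hy
    exact hτmono x y hxy
  have hvD : (∃ b, f x₀ = some b) → v ∈ Dγ := fun h => Or.inr (Or.inl ⟨h, rfl⟩)
  have hvnotD : f x₀ = none → v ∉ Dγ := by
    intro h0 hmem
    rcases hmem with ⟨w, b, hb, hlt, heq⟩ | ⟨⟨b, hb⟩, -⟩ | ⟨w, b, hb, hlt, heq⟩ | heq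
    · have h1 := (hE1 w b hb hlt).1
      have := congrArg Fin.val heq; omega
    · rw [h0] at hb; exact nomatch hb
    · have h1 := (hE2 w b hb hlt).1
      omega
    · have h2 : (τ e).val = v.val := by rw [← heq]; exact hτlow v (le_refl _)
      rw [hτe] at h2
      exact hzv' h2
  have hcomp : f = β * γ := by
    funext x9
    show f x9 = (β x9).bind γ
    by_cases hx9 : x9 = x₀
    · subst hx9
      rw [hβx₀, Option.bind_some]
      cases hfx : f x9 with
      | none => rw [hγnone v (hvnotD hfx)]
      | some b =>
        have hb := hE3 b hfx
        rw [hb, hγmem v (hvD ⟨b, hfx⟩)]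
        exact congrArg some (Fin.ext (hτlow v (le_refl _))).symm
    · rcases Nat.lt_trichotomy x9.val x₀.val with h | h | h
      · rw [hβlt x9 h]
        cases hfx : f x9 with
        | none => rfl
        | some b =>
          have hmem : b ∈ Dγ := Or.inl ⟨x9, b, hfx, h, rfl⟩
          rw [Option.bind_some, hγmem b hmem]
          have hb1 := (hE1 x9 b hfx h).1
          exact congrArg some (Fin.ext (hτlow b (by omega))).symm
      · exact absurd (Fin.ext h) hx9
      · cases hfx : f x9 with
        | none => rw [hβgt_none x9 hfx hx9]; rfl
        | some b =>
          rw [hβgt x9 b hfx h, Option.bind_some]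
          have h5 := hE5 x9 b hfx
          have hmem : (⟨b.val+1, h5⟩ : Fin n) ∈ Dγ :=
            Or.inr (Or.inr (Or.inl ⟨x9, b, hfx, h, rfl⟩))
          rw [hγmem _ hmem]
          have hb2 := (hE2 x9 b hfx h).1
          refine congrArg some (Fin.ext ?_).symm
          rw [hτhigh _ (by simp; omega)]; simp
  have himγ : im γ = insert z (im f) := by
    ext cc
    constructor
    · rintro ⟨w, hw⟩
      obtain ⟨rfl, hmem⟩ := hγval w cc hw
      rcases hmem with ⟨w', b, hb, hlt, heq⟩ | ⟨hb, heq⟩ | ⟨w', b, hb, hlt, heq⟩ | heq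
      · right
        have h1 := (hE1 w' b hb hlt).1
        have ht : τ w = b := by rw [heq]; exact Fin.ext (hτlow b (by omega))
        rw [ht]; exact ⟨w', hb⟩
      · right
        have ht : τ w = v := by rw [heq]; exact Fin.ext (hτlow v (le_refl _))
        rw [ht]; exact hvim
      · right
        have h1 := (hE2 w' b hb hlt).1
        have ht : τ w = b := Fin.ext (by rw [hτhigh w (by omega)]; omega)
        rw [ht]; exact ⟨w', hb⟩
      · left
        exact Fin.ext (by rw [heq]; exact hτe)
    · intro hcc
      rcases Set.mem_insert_iff.mp hcc with rfl | ⟨w, hw⟩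
      · refine ⟨e, ?_⟩
        rw [hγmem e (Or.inr (Or.inr (Or.inr rfl)))]
        exact congrArg some (Fin.ext hτe)
      · rcases Nat.lt_trichotomy w.val x₀.val with h | h | h
        · refine ⟨cc, ?_⟩
          have hmem : cc ∈ Dγ := Or.inl ⟨w, cc, hw, h, rfl⟩
          rw [hγmem cc hmem]
          have h1 := (hE1 w cc hw h).1
          exact congrArg some (Fin.ext (hτlow cc (by omega)))
        · have hw' : f x₀ = some cc := by
            rw [show x₀ = w from (Fin.ext h).symm]; exact hw
          have hcv := hE3 cc hw'
          refine ⟨v, ?_⟩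
          rw [hγmem v (hvD ⟨cc, hw'⟩), hcv]
          exact congrArg some (Fin.ext (hτlow v (le_refl _)))
        · have h5 := hE5 w cc hw
          refine ⟨⟨cc.val+1, h5⟩, ?_⟩
          have hmem : (⟨cc.val+1, h5⟩ : Fin n) ∈ Dγ :=
            Or.inr (Or.inr (Or.inl ⟨w, cc, hw, h, rfl⟩))
          rw [hγmem _ hmem]
          have h1 := (hE2 w cc hw h).1
          refine congrArg some (Fin.ext ?_)
          rw [hτhigh _ (by simp; omega)]; simp
  have himγn : (im γ).ncard = p + 1 := by
    rw [himγ, Set.ncard_insert_of_notMem hz2 (Set.toFinite _), hp]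
  set g : Fin n → Fin n := fun b =>
    if b.val < v.val then b else (if h : b.val + 1 < n then ⟨b.val+1, h⟩ else b) with hg_def
  have hgval : ∀ b : Fin n, g b =
      if b.val < v.val then b else (if h : b.val + 1 < n then ⟨b.val+1, h⟩ else b) := by
    intro b; rw [hg_def]
  have hglow : ∀ b : Fin n, b.val < v.val → g b = b := by
    intro b h; rw [hgval, if_pos h]
  have hghigh : ∀ (b : Fin n), v.val ≤ b.val → ∀ (h5 : b.val + 1 < n), g b = ⟨b.val+1, h5⟩ := by
    intro b h h5; rw [hgval, if_neg (by omega), dif_pos h5]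
  have himβ : im β = insert v (g '' im f) := by
    ext cc
    constructor
    · rintro ⟨x, hx⟩
      rcases hβinv x cc hx with ⟨-, rfl⟩ | ⟨h1, h2⟩ | ⟨h1, b, h2, h3⟩
      · exact Set.mem_insert _ _
      · right; exact ⟨cc, ⟨x, h2⟩, hglow cc (hE1 x cc h2 h1).1⟩
      · right
        refine ⟨b, ⟨x, h2⟩, ?_⟩
        rw [hghigh b (hE2 x b h2 h1).1 (hE5 x b h2)]
        exact Fin.ext h3.symm
    · intro hcc
      rcases Set.mem_insert_iff.mp hcc with rfl | ⟨b, ⟨w, hw⟩, rfl⟩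
      · exact ⟨x₀, hβx₀⟩
      · rcases Nat.lt_trichotomy w.val x₀.val with h | h | h
        · rw [hglow b (hE1 w b hw h).1]
          exact ⟨w, by rw [hβlt w h, hw]⟩
        · have hw' : f x₀ = some b := by
            rw [show x₀ = w from (Fin.ext h).symm]; exact hw
          have hbv := hE3 b hw'
          rw [hbv, hghigh v (le_refl _) hvn]
          exact ⟨y₀, hβgt y₀ v hy₀2 hy₀1⟩
        · rw [hghigh b (hE2 w b hw h).1 (hE5 w b hw)]
          exact ⟨w, hβgt w b hw h⟩
  have hvg : v ∉ g '' im f := by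
    rintro ⟨b, hbim, hgb⟩
    obtain ⟨w, hw⟩ := hbim
    have h5 := hE5 w b hw
    by_cases hb : b.val < v.val
    · rw [hglow b hb] at hgb
      have := congrArg Fin.val hgb; omega
    · rw [hghigh b (by omega) h5] at hgb
      have := congrArg Fin.val hgb; simp at this; omega
  have hginj : Set.InjOn g (im f) := by
    rintro b1 hb1 b2 hb2 heq
    obtain ⟨w1, hw1⟩ := hb1
    obtain ⟨w2, hw2⟩ := hb2
    have h51 := hE5 w1 b1 hw1
    have h52 := hE5 w2 b2 hw2
    apply Fin.ext
    by_cases c1 : b1.val < v.val <;> by_cases c2 : b2.val < v.val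
    · rw [hglow b1 c1, hglow b2 c2] at heq; exact congrArg Fin.val heq
    · rw [hglow b1 c1, hghigh b2 (by omega) h52] at heq
      have := congrArg Fin.val heq; simp at this; omega
    · rw [hghigh b1 (by omega) h51, hglow b2 c2] at heq
      have := congrArg Fin.val heq; simp at this; omega
    · rw [hghigh b1 (by omega) h51, hghigh b2 (by omega) h52] at heq
      have := congrArg Fin.val heq; simp at this; omega
  have himβn : (im β).ncard = p + 1 := by
    rw [himβ, Set.ncard_insert_of_notMem hvg (Set.toFinite _),
      Set.ncard_image_of_injOn hginj, hp]
  exact ⟨β, γ, nice_isOP hβnice, nice_isC hβnice, nice_isOP hγnice, nice_isC hγnice,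
    himβn, himγn, hcomp⟩




lemma lemA {n : ℕ} (f : PT n) (p : ℕ) (hop : IsOP f) (hc : IsContraction f)
    (hp : (im f).ncard = p) (hp1 : 1 ≤ p) (hpn : p + 2 ≤ n)
    (htop : ∀ w b, f w = some b → b.val + 1 < n) :
    ∃ β γ : PT n, IsOP β ∧ IsContraction β ∧ IsOP γ ∧ IsContraction γ ∧
      (im β).ncard = p + 1 ∧ (im γ).ncard = p + 1 ∧ f = β * γ := by
  classical
  have hnice := nice_of hop hc
  by_cases hinj : ∃ w w' b, f w = some b ∧ f w' = some b ∧ w.val < w'.val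
  · -- fat fiber scheme
    obtain ⟨w1, w2, v, h1, h2, h12⟩ := hinj
    set F : Finset (Fin n) := Finset.univ.filter (fun w => f w = some v) with hF_def
    have hw1F : w1 ∈ F := by simp [hF_def, h1]
    have hFne : F.Nonempty := ⟨w1, hw1F⟩
    set x₀ := F.min' hFne with hx₀_def
    have hx₀F : x₀ ∈ F := F.min'_mem hFne
    have hfx₀ : f x₀ = some v := by simpa [hF_def] using hx₀F
    have hmin : ∀ w, f w = some v → x₀.val ≤ w.val := by
      intro w hw
      exact Fin.le_def.mp (F.min'_le w (by simp [hF_def, hw]))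
    have hx₀w2 : x₀.val < w2.val := by
      have := hmin w1 h1
      omega
    apply core f p hop hc hp hpn x₀ v
    · intro w b hb hlt
      have hle := hnice w x₀ b v hb hfx₀ hlt
      constructor
      · rcases Nat.lt_or_ge b.val v.val with h | h
        · exact h
        · have hbv : b = v := Fin.ext (by omega)
          have := hmin w (hbv ▸ hb)
          omega
      · omega
    · intro w b hb hgt
      have hle := hnice x₀ w v b hfx₀ hb hgt
      refine ⟨by omega, ?_⟩
      rcases Nat.lt_or_ge v.val b.val with h | h
      · have hww2 : w2.val < w.val := by
          rcases Nat.lt_trichotomy w.val w2.val with hh | hh | hh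
          · have := hnice w w2 b v hb h2 hh; omega
          · have hw : w = w2 := Fin.ext hh
            rw [hw, h2] at hb
            have := congrArg (Option.map Fin.val) hb
            simp at this; omega
          · exact hh
        have := hnice w2 w v b h2 hb hww2
        omega
      · omega
    · intro b hb
      rw [hfx₀] at hb
      injection hb with hb
      exact hb.symm
    · exact ⟨w2, hx₀w2, h2⟩
    · exact htop
  · by_cases hext : ∃ m a, f m = some a ∧ 1 ≤ m.val ∧
        (∀ w b, f w = some b → w.val < m.val → b.val < a.val ∧ a.val + w.val < b.val + m.val)
    · -- extension scheme
      obtain ⟨m, a, hma, hm1, hEx⟩ := hext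
      have hm0 : m.val - 1 < n := by have := m.isLt; omega
      set x₀ : Fin n := ⟨m.val - 1, hm0⟩ with hx₀_def
      have hxv : x₀.val = m.val - 1 := rfl
      apply core f p hop hc hp hpn x₀ a
      · intro w b hb hlt
        have hlt' : w.val < m.val := by omega
        have := hEx w b hb hlt'
        exact ⟨by omega, by omega⟩
      · intro w b hb hgt
        have hge : m.val ≤ w.val := by omega
        rcases Nat.eq_or_lt_of_le hge with heq | hlt
        · have hwm : w = m := Fin.ext heq.symm
          rw [hwm, hma] at hb
          have := congrArg (Option.map Fin.val) hb
          simp at this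
          exact ⟨by omega, by omega⟩
        · have := hnice m w a b hma hb hlt
          exact ⟨by omega, by omega⟩
      · intro b hb
        have hlt' : x₀.val < m.val := by omega
        have h1 := hEx x₀ b hb hlt'
        exfalso; omega
      · exact ⟨m, by omega, hma⟩
      · exact htop
    · -- translation scheme
      push_neg at hinj hext
      have hn0 : 0 < n := by omega
      have base : ∀ (m am : Fin n), f m = some am → m.val = 0 →
          m.val ≤ am.val ∧ f ⟨0, hn0⟩ = some ⟨am.val - m.val, by have := am.isLt; omega⟩ := by
        intro m am hm h0
        have hm0 : m = ⟨0, hn0⟩ := Fin.ext h0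
        refine ⟨by omega, ?_⟩
        have hval : (⟨am.val - m.val, by have := am.isLt; omega⟩ : Fin n) = am :=
          Fin.ext (by simp; omega)
        rw [hval, ← hm0]
        exact hm
      have key : ∀ k (m am : Fin n), f m = some am → m.val ≤ k →
          m.val ≤ am.val ∧ f ⟨0, hn0⟩ = some ⟨am.val - m.val, by have := am.isLt; omega⟩ := by
        intro k
        induction k with
        | zero =>
          intro m am hm hle
          exact base m am hm (by omega)
        | succ k ih =>
          intro m am hm hle
          rcases Nat.eq_zero_or_pos m.val with h0 | hpos
          · exact base m am hm h0
          · obtain ⟨w, b, hwb, hwm, hd⟩ := hext m am hm hpos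
            have hOP := hnice w m b am hwb hm hwm
            have hne : b.val ≠ am.val := by
              intro hh
              have hbam : b = am := Fin.ext hh
              have hm' : f m = some b := by rw [hm, hbam]
              have := hinj w m b hwb hm'
              omega
            have heq : am.val + w.val = b.val + m.val := by
              have := hd (by omega)
              omega
            obtain ⟨hw1, hw2⟩ := ih w b hwb (by omega)
            refine ⟨by omega, ?_⟩
            have hval : (⟨am.val - m.val, by have := am.isLt; omega⟩ : Fin n) =
                ⟨b.val - w.val, by have := b.isLt; omega⟩ := Fin.ext (by simp; omega)
            rw [hval]
            exact hw2
      have himne : (im f).Nonempty := by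
        rw [← Set.ncard_pos (Set.toFinite _), hp]; omega
      obtain ⟨b0, w0, hw0⟩ := himne
      obtain ⟨hge, hf0⟩ := key n w0 b0 hw0 (by omega)
      set t := b0.val - w0.val with ht_def
      have Ht : ∀ w b, f w = some b → b.val = w.val + t := by
        intro w b hw
        obtain ⟨hge', hf0''⟩ := key n w b hw (by omega)
        rw [hf0] at hf0''
        injection hf0'' with hf0''
        have := congrArg Fin.val hf0''
        simp at this
        omega
      have ht_lt : t + 1 < n := by
        have := htop _ _ hf0
        simpa using this
      set c : Fin n := ⟨n - 1 - t, by omega⟩ with hc_def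
      have hcv : c.val = n - 1 - t := rfl
      have hcnone : f c = none := by
        cases hfc : f c with
        | none => rfl
        | some b =>
          have hb1 := Ht c b hfc
          have hb2 := htop c b hfc
          exfalso; omega
      exact padding f p t hp hpn Ht c hcnone (by omega)




def rv {n : ℕ} (hn : 0 < n) : Fin n → Fin n := fun x => ⟨n - 1 - x.val, by omega⟩

def revp {n : ℕ} (hn : 0 < n) : PT n := fun x => some (rv hn x)

def conj {n : ℕ} (hn : 0 < n) (g : PT n) : PT n := revp hn * (g * revp hn)

lemma rv_val {n : ℕ} (hn : 0 < n) (x : Fin n) : (rv hn x).val = n - 1 - x.val := rfl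

lemma rv_rv {n : ℕ} (hn : 0 < n) (x : Fin n) : rv hn (rv hn x) = x :=
  Fin.ext (by have := x.isLt; simp [rv_val]; omega)

lemma rv_inj {n : ℕ} (hn : 0 < n) : Function.Injective (rv hn) := by
  intro a b hab
  have := congrArg Fin.val hab
  have ha := a.isLt; have hb := b.isLt
  exact Fin.ext (by simp [rv_val] at this; omega)

lemma conj_apply {n : ℕ} (hn : 0 < n) (g : PT n) (x : Fin n) :
    conj hn g x = (g (rv hn x)).bind (revp hn) := rfl

lemma conj_some {n : ℕ} (hn : 0 < n) (g : PT n) (x b : Fin n) :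
    conj hn g x = some b ↔ ∃ a, g (rv hn x) = some a ∧ b = rv hn a := by
  rw [conj_apply]
  cases hg : g (rv hn x) with
  | none => simp
  | some a =>
    simp [revp]
    constructor
    · intro h; exact h.symm
    · intro h; exact h.symm

lemma conj_nice {n : ℕ} (hn : 0 < n) {g : PT n} (h : Nice g) : Nice (conj hn g) := by
  intro x y a b hx hy hxy
  obtain ⟨a', ha', rfl⟩ := (conj_some hn g x a).mp hx
  obtain ⟨b', hb', rfl⟩ := (conj_some hn g y b).mp hy
  have h1 : (rv hn y).val = n - 1 - y.val := rv_val hn y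
  have h2 : (rv hn x).val = n - 1 - x.val := rv_val hn x
  have h3 : (rv hn a').val = n - 1 - a'.val := rv_val hn a'
  have h4 : (rv hn b').val = n - 1 - b'.val := rv_val hn b'
  have hylt := y.isLt
  have ha'lt := a'.isLt
  have hb'lt := b'.isLt
  obtain ⟨c1, c2⟩ := h (rv hn y) (rv hn x) b' a' hb' ha' (by omega)
  constructor <;> omega

lemma conj_im {n : ℕ} (hn : 0 < n) (g : PT n) : im (conj hn g) = rv hn '' im g := by
  ext z
  constructor
  · rintro ⟨x, hx⟩
    obtain ⟨a, ha, rfl⟩ := (conj_some hn g x z).mp hx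
    exact ⟨a, ⟨rv hn x, ha⟩, rfl⟩
  · rintro ⟨a, ⟨w, hw⟩, rfl⟩
    refine ⟨rv hn w, (conj_some hn g (rv hn w) (rv hn a)).mpr ⟨a, ?_, rfl⟩⟩
    rw [rv_rv]
    exact hw

lemma conj_ncard {n : ℕ} (hn : 0 < n) (g : PT n) : (im (conj hn g)).ncard = (im g).ncard := by
  rw [conj_im, Set.ncard_image_of_injective _ (rv_inj hn)]

lemma conj_mul {n : ℕ} (hn : 0 < n) (g h : PT n) :
    conj hn g * conj hn h = conj hn (g * h) := by
  funext x
  have hmul : (g * h) (rv hn x) = (g (rv hn x)).bind h := rfl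
  show (conj hn g x).bind (conj hn h) = ((g * h) (rv hn x)).bind (revp hn)
  rw [conj_apply, hmul]
  cases hg : g (rv hn x) with
  | none => rfl
  | some a =>
    rw [Option.bind_some, Option.bind_some]
    show (conj hn h) (rv hn a) = (h a).bind (revp hn)
    rw [conj_apply, rv_rv]

lemma conj_conj {n : ℕ} (hn : 0 < n) (g : PT n) : conj hn (conj hn g) = g := by
  funext x
  rw [conj_apply, conj_apply, rv_rv]
  cases hg : g x with
  | none => rfl
  | some a =>
    show ((some (rv hn a)) : Option (Fin n)).bind (revp hn) = some a
    rw [Option.bind_some]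
    show some (rv hn (rv hn a)) = some a
    rw [rv_rv]



end Stmt5

/-- for `n ≥ 3` and `1 ≤ p ≤ n-2`, every `α ∈ OCP_n` with `|im α| = p` factors as
`α = βγ` with `β, γ ∈ OCP_n` of image size `p+1`. -/
theorem stmt_5 {n p : ℕ} (hn : 3 ≤ n) (hp1 : 1 ≤ p) (hp2 : p ≤ n - 2)
    (f : PT n) (hop : IsOP f) (hc : IsContraction f) (him : (im f).ncard = p) :
    ∃ β γ : PT n, IsOP β ∧ IsContraction β ∧ IsOP γ ∧ IsContraction γ ∧
      (im β).ncard = p + 1 ∧ (im γ).ncard = p + 1 ∧ f = β * γ := by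
  classical
  open Stmt5 in
  have hn0 : 0 < n := by omega
  have hpn : p + 2 ≤ n := by omega
  by_cases htop : ∀ w b, f w = some b → b.val + 1 < n
  · exact Stmt5.lemA f p hop hc him hp1 hpn htop
  · push_neg at htop
    obtain ⟨wN, bN, hwN, hbN⟩ := htop
    have hbNlt := bN.isLt
    have hbN' : bN.val = n - 1 := by omega
    have hnice := Stmt5.nice_of hop hc
    by_cases hbot : ∃ w b, f w = some b ∧ b.val = 0
    · -- 0 and n-1 both in the image: f is the identity on its domain
      obtain ⟨w0, b0, hw0, hb0⟩ := hbot
      have hkey : w0.val = 0 ∧ wN.val = n - 1 := by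
        have hwNlt := wN.isLt
        rcases Nat.lt_trichotomy w0.val wN.val with h | h | h
        · have := hnice w0 wN b0 bN hw0 hwN h
          constructor <;> omega
        · exfalso
          have hww : w0 = wN := Fin.ext h
          rw [hww, hwN] at hw0
          have := congrArg (Option.map Fin.val) hw0
          simp at this; omega
        · exfalso
          have := hnice wN w0 bN b0 hwN hw0 h
          omega
      have Hid : ∀ w b, f w = some b → b.val = w.val + 0 := by
        intro w b hw
        have h1 : b.val ≤ w.val := by
          rcases Nat.lt_or_ge w0.val w.val with h | h
          · have := hnice w0 w b0 b hw0 hw h; omega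
          · have hww : w = w0 := Fin.ext (by omega)
            rw [hww, hw0] at hw
            have := congrArg (Option.map Fin.val) hw
            simp at this; omega
        have h2 : w.val ≤ b.val := by
          have hwlt := w.isLt
          rcases Nat.lt_or_ge w.val wN.val with h | h
          · have := hnice w wN b bN hw hwN h
            have := b.isLt; omega
          · have hww : w = wN := Fin.ext (by omega)
            rw [hww, hwN] at hw
            have := congrArg (Option.map Fin.val) hw
            simp at this; omega
        omega
      have hcex : ∃ c, f c = none := by
        by_contra hcon
        push_neg at hcon
        have huniv : im f = Set.univ := by
          apply Set.eq_univ_of_forall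
          intro y
          cases hfy : f y with
          | none => exact absurd hfy (hcon y)
          | some b =>
            have := Hid y b hfy
            have hby : b = y := Fin.ext (by omega)
            exact ⟨y, by rw [hfy, hby]⟩
        rw [huniv, Set.ncard_univ, Nat.card_eq_fintype_card, Fintype.card_fin] at him
        omega
      obtain ⟨c, hcnone⟩ := hcex
      exact Stmt5.padding f p 0 him hpn Hid c hcnone (by have := c.isLt; omega)
    · -- the image misses 0 : conjugate by the reversal
      push_neg at hbot
      have htop' : ∀ w b, Stmt5.conj hn0 f w = some b → b.val + 1 < n := by
        intro w b hw
        obtain ⟨a, ha, rfl⟩ := (Stmt5.conj_some hn0 f w b).mp hw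
        have h0 := hbot (Stmt5.rv hn0 w) a ha
        have halt := a.isLt
        have := Stmt5.rv_val hn0 a
        omega
      have hopc : IsOP (Stmt5.conj hn0 f) := Stmt5.nice_isOP (Stmt5.conj_nice hn0 hnice)
      have hcc : IsContraction (Stmt5.conj hn0 f) := Stmt5.nice_isC (Stmt5.conj_nice hn0 hnice)
      have hcard : (im (Stmt5.conj hn0 f)).ncard = p := by
        rw [Stmt5.conj_ncard, him]
      obtain ⟨β', γ', h1, h2, h3, h4, h5, h6, h7⟩ :=
        Stmt5.lemA (Stmt5.conj hn0 f) p hopc hcc hcard hp1 hpn htop'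
      have hβnice := Stmt5.nice_of h1 h2
      have hγnice := Stmt5.nice_of h3 h4
      refine ⟨Stmt5.conj hn0 β', Stmt5.conj hn0 γ',
        Stmt5.nice_isOP (Stmt5.conj_nice hn0 hβnice), Stmt5.nice_isC (Stmt5.conj_nice hn0 hβnice),
        Stmt5.nice_isOP (Stmt5.conj_nice hn0 hγnice), Stmt5.nice_isC (Stmt5.conj_nice hn0 hγnice),
        by rw [Stmt5.conj_ncard, h5], by rw [Stmt5.conj_ncard, h6], ?_⟩
      rw [Stmt5.conj_mul, ← h7, Stmt5.conj_conj]
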